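/- Gluing of non-anticipating strategies: let t ≤ τ ≤ T, let γ̃ ∈ Γ(t) be a non-anticipating strategy on [t,T], and for each possible state reached at time τ let γ_τ ∈ Γ(τ) be a non-anticipating strategy on [τ,T] depending on the restriction of β to [t,τ] only through the state it generates at time τ. Then the concatenated map γ̂[β](s) = γ̃[β](s) for s ∈ [t,τ] and γ̂[β](s) = γ_{(y(τ), m(τ))}[β|_{[τ,T]}](s) for s ∈ [τ,T] is well defined and non-anticipating, i.e. γ̂ ∈ Γ(t). -/
import Mathlib


open Set MeasureTheory

/-- gluing of non-anticipating strategies.  Let `t ≤ τ ≤ T`, let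
`γt` be a non-anticipating strategy on `[t,T]`, let `σ β` be the state (player
position and mass) generated at time `τ`, which depends only on the restriction of
`β` to `[t,τ]`, and for each state let `γfam st` be a non-anticipating strategy on
`[τ,T]`.  Then the concatenation
`γ̂[β](s) = γt[β](s)` for `s ≤ τ`, `γ̂[β](s) = γfam (σ β) [β](s)` for `s > τ`
is well defined (it maps measurable controls to measurable controls) and is
non-anticipating on `[t,T]`. -/
theorem stmt_18 {F Am St : Type*} [MeasurableSpace Am]
    (T t τ : ℝ) (ht : t ≤ τ) (hτ : τ ≤ T)
    (γt : (ℝ → F) → (ℝ → Am))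
    (hγt : ∀ τ' ∈ Icc t T, ∀ β₁ β₂ : ℝ → F,
      (∀ᵐ s ∂(volume : Measure ℝ), s ∈ Icc t τ' → β₁ s = β₂ s) →
      (∀ᵐ s ∂(volume : Measure ℝ), s ∈ Icc t τ' → γt β₁ s = γt β₂ s))
    (σ : (ℝ → F) → St)
    (hσ : ∀ β₁ β₂ : ℝ → F,
      (∀ᵐ s ∂(volume : Measure ℝ), s ∈ Icc t τ → β₁ s = β₂ s) → σ β₁ = σ β₂)
    (γfam : St → (ℝ → F) → (ℝ → Am))
    (hγfam : ∀ st : St, ∀ τ' ∈ Icc τ T, ∀ β₁ β₂ : ℝ → F,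
      (∀ᵐ s ∂(volume : Measure ℝ), s ∈ Icc τ τ' → β₁ s = β₂ s) →
      (∀ᵐ s ∂(volume : Measure ℝ), s ∈ Icc τ τ' → γfam st β₁ s = γfam st β₂ s)) :
    -- well-definedness: the concatenation maps measurable controls to measurable controls
    (∀ β : ℝ → F, Measurable (γt β) → (∀ st, Measurable (γfam st β)) →
      Measurable fun s => if s ≤ τ then γt β s else γfam (σ β) β s) ∧
    -- non-anticipativity on `[t,T]`
    (∀ τ' ∈ Icc t T, ∀ β₁ β₂ : ℝ → F,
      (∀ᵐ s ∂(volume : Measure ℝ), s ∈ Icc t τ' → β₁ s = β₂ s) →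
      (∀ᵐ s ∂(volume : Measure ℝ), s ∈ Icc t τ' →
        (if s ≤ τ then γt β₁ s else γfam (σ β₁) β₁ s) =
        (if s ≤ τ then γt β₂ s else γfam (σ β₂) β₂ s))) := by
  constructor
  · intro β h1 h2
    exact Measurable.ite (measurableSet_Iic (a := τ)) h1 (h2 (σ β))
  · intro τ' hτ' β₁ β₂ hβ
    rcases le_or_gt τ' τ with h | h
    · filter_upwards [hγt τ' hτ' β₁ β₂ hβ] with s hs hmem
      rw [if_pos (hmem.2.trans h), if_pos (hmem.2.trans h)]
      exact hs hmem
    · have hσeq : σ β₁ = σ β₂ := by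
        apply hσ
        filter_upwards [hβ] with s hs hmem
        exact hs ⟨hmem.1, hmem.2.trans h.le⟩
      have hβt : ∀ᵐ s ∂(volume : Measure ℝ), s ∈ Icc t τ → β₁ s = β₂ s := by
        filter_upwards [hβ] with s hs hmem
        exact hs ⟨hmem.1, hmem.2.trans h.le⟩
      have hβτ : ∀ᵐ s ∂(volume : Measure ℝ), s ∈ Icc τ τ' → β₁ s = β₂ s := by
        filter_upwards [hβ] with s hs hmem
        exact hs ⟨ht.trans hmem.1, hmem.2⟩
      filter_upwards [hγt τ ⟨ht, hτ⟩ β₁ β₂ hβt,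
        hγfam (σ β₁) τ' ⟨h.le, hτ'.2⟩ β₁ β₂ hβτ] with s h1 h2 hmem
      by_cases hsτ : s ≤ τ
      · rw [if_pos hsτ, if_pos hsτ]
        exact h1 ⟨hmem.1, hsτ⟩
      · rw [if_neg hsτ, if_neg hsτ, ← hσeq]
        exact h2 ⟨(not_le.mp hsτ).le, hmem.2⟩
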